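/- Let λ ∈ (0, λ_max) and let j ∈ {1,…,p}. If Px̄^j = 0, then every minimizer (β, c) ∈ ℝ^p × ℝ of LRP_λ satisfies β_j = 0. -/

import Mathlib

open scoped Classical in
/-- `m⁺ = #{i : b_i = 1}`. -/
noncomputable def mPlus (m : ℕ) (b : Fin m → ℝ) : ℕ :=
  (Finset.univ.filter (fun i => b i = 1)).card

open scoped Classical in
/-- `m⁻ = #{i : b_i = −1}`. -/
noncomputable def mMinus (m : ℕ) (b : Fin m → ℝ) : ℕ :=
  (Finset.univ.filter (fun i => b i = -1)).card

open scoped Classical in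
/-- `θ_max`, with `(θ_max)_i = m⁻/m` if `b_i = 1` and `m⁺/m` if `b_i = −1`. -/
noncomputable def thetaMax (m : ℕ) (b : Fin m → ℝ) : Fin m → ℝ :=
  fun i => if b i = 1 then (mMinus m b : ℝ) / m else (mPlus m b : ℝ) / m

/-- `λ_max = (1/m) max_j |⟨θ_max, x̄^j⟩|`. -/
noncomputable def lamMax (m p : ℕ) (X : Fin p → Fin m → ℝ) (b : Fin m → ℝ) : ℝ :=
  (1 / (m : ℝ)) * ⨆ j : Fin p, |∑ i, thetaMax m b i * X j i|
/-- `P`, the orthogonal projection onto the orthogonal complement of `b`: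
`Pv = v − (⟨v,b⟩/‖b‖₂²) b`. -/
noncomputable def Pb (m : ℕ) (b : Fin m → ℝ) (v : Fin m → ℝ) : Fin m → ℝ :=
  fun i => v i - ((∑ k, v k * b k) / (∑ k, (b k) ^ 2)) * b i
/-- The ℓ1-regularized logistic regression objective `LRP_λ`:
`(1/m) Σ_i log(1 + exp(−⟨β, x̄_i⟩ − b_i c)) + λ‖β‖₁`, where the rows are
`(x̄_i)_j = X j i`. -/
noncomputable def LRP (m p : ℕ) (X : Fin p → Fin m → ℝ) (b : Fin m → ℝ) (lam : ℝ)
    (β : Fin p → ℝ) (c : ℝ) : ℝ :=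
  (1 / (m : ℝ)) * ∑ i, Real.log (1 + Real.exp (-(∑ j, β j * X j i) - b i * c))
    + lam * ∑ j, |β j|

/-- Corollary 5: for `λ ∈ (0, λ_max)`, if `Px̄^j = 0` then every minimizer
`(β, c)` of `LRP_λ` satisfies `β_j = 0`. -/
theorem slores_orthogonal_feature_zero (m p : ℕ) (hm : 1 ≤ m) (hp : 1 ≤ p)
    (X : Fin p → Fin m → ℝ) (b : Fin m → ℝ) (hb : ∀ i, b i = 1 ∨ b i = -1)
    (hmp : 1 ≤ mPlus m b) (hmm : 1 ≤ mMinus m b) (hlmax : 0 < lamMax m p X b)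
    (lam : ℝ) (hlam : 0 < lam) (hlt : lam < lamMax m p X b)
    (j : Fin p) (hPj : Pb m b (X j) = 0)
    (β : Fin p → ℝ) (c : ℝ)
    (hmin : ∀ β' c', LRP m p X b lam β c ≤ LRP m p X b lam β' c') :
    β j = 0 := by
  classical
  set α : ℝ := (∑ k, X j k * b k) / (∑ k, (b k) ^ 2) with hα
  have hXj : ∀ i, X j i = α * b i := by
    intro i
    have h := congrFun hPj i
    simp only [Pb, Pi.zero_apply] at h
    linarith [h]
  set β' : Fin p → ℝ := Function.update β j 0 with hβ'
  have hsum : ∀ i : Fin m, (∑ j', β' j' * X j' i) + β j * X j i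
      = ∑ j', β j' * X j' i := by
    intro i
    rw [← Finset.sum_erase_add Finset.univ (fun j' => β j' * X j' i) (Finset.mem_univ j),
        ← Finset.sum_erase_add Finset.univ (fun j' => β' j' * X j' i) (Finset.mem_univ j)]
    have h1 : β' j = 0 := Function.update_self j 0 β
    have h2 : ∑ j' ∈ Finset.univ.erase j, β' j' * X j' i
        = ∑ j' ∈ Finset.univ.erase j, β j' * X j' i := by
      refine Finset.sum_congr rfl fun k hk => ?_
      rw [hβ', Function.update_of_ne (Finset.ne_of_mem_erase hk)]
    rw [h1, h2]; ring
  have habs : (∑ j', |β' j'|) + |β j| = ∑ j', |β j'| := by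
    rw [← Finset.sum_erase_add Finset.univ (fun j' => |β j'|) (Finset.mem_univ j),
        ← Finset.sum_erase_add Finset.univ (fun j' => |β' j'|) (Finset.mem_univ j)]
    have h1 : β' j = 0 := Function.update_self j 0 β
    have h2 : ∑ j' ∈ Finset.univ.erase j, |β' j'|
        = ∑ j' ∈ Finset.univ.erase j, |β j'| := by
      refine Finset.sum_congr rfl fun k hk => ?_
      rw [hβ', Function.update_of_ne (Finset.ne_of_mem_erase hk)]
    rw [h1, h2]; simp
  have key := hmin β' (c + α * β j)
  have hlog : ∀ i : Fin m,
      Real.log (1 + Real.exp (-(∑ j', β' j' * X j' i) - b i * (c + α * β j)))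
      = Real.log (1 + Real.exp (-(∑ j', β j' * X j' i) - b i * c)) := by
    intro i
    have harg : -(∑ j', β' j' * X j' i) - b i * (c + α * β j)
        = -(∑ j', β j' * X j' i) - b i * c := by
      linear_combination (β j) * hXj i - hsum i
    rw [harg]
  unfold LRP at key
  rw [Finset.sum_congr rfl (fun i _ => hlog i)] at key
  have hpen : lam * ∑ j', |β j'| ≤ lam * ∑ j', |β' j'| := by linarith
  have : |β j| ≤ 0 := by
    have h := (mul_le_mul_iff_right₀ hlam).mp hpen
    linarith
  have := abs_nonneg (β j)
  have : |β j| = 0 := le_antisymm ‹|β j| ≤ 0› ‹0 ≤ |β j|›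
  exact abs_eq_zero.mp this
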